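/- For all 0 < β ≤ γ and every z ∈ G: g_β(z) ≤ g_γ(z) + ((γ − β)/(2β²)) ‖z − prox_{βg}(z)‖². -/

import Mathlib

open RealInnerProductSpace

private lemma aux_sq (a b β γ : ℝ) (hβ : β ≠ 0) (hγ : γ ≠ 0) :
    a ^ 2 / (2 * γ) - b * a / β + γ * b ^ 2 / (2 * β ^ 2)
      = (β * a - γ * b) ^ 2 / (2 * γ * β ^ 2) := by
  field_simp; ring

private lemma aux_alg (c U β γ : ℝ) (hβ : β ≠ 0) :
    c + U / (2 * β)
      = (c + U / β - γ * U / (2 * β ^ 2)) + ((γ - β) / (2 * β ^ 2)) * U := by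
  field_simp; ring

private lemma aux_exp (U c w t β : ℝ) (hβ : β ≠ 0) :
    (U - 2 * t * c + t ^ 2 * w) / (2 * β)
      = U / (2 * β) - t * (c / β) + t ^ 2 * (w / (2 * β)) := by
  field_simp

theorem stmt13
    (d : ℕ)
    (g : EuclideanSpace ℝ (Fin d) → ℝ)
    (hg_cvx : ConvexOn ℝ Set.univ g)
    (L : ℝ) (hL : 0 < L)
    (hg_lip : ∀ z₁ z₂, |g z₁ - g z₂| ≤ L * ‖z₁ - z₂‖)
    (gβ : ℝ → EuclideanSpace ℝ (Fin d) → ℝ)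
    (hgβ : ∀ β, 0 < β → ∀ z, gβ β z = ⨅ y : EuclideanSpace ℝ (Fin d), (g y + ‖z - y‖ ^ 2 / (2 * β)))
    (prox : ℝ → EuclideanSpace ℝ (Fin d) → EuclideanSpace ℝ (Fin d))
    (hprox : ∀ β, 0 < β → ∀ z y, g (prox β z) + ‖z - prox β z‖ ^ 2 / (2 * β)
        ≤ g y + ‖z - y‖ ^ 2 / (2 * β)) :
    ∀ β γ : ℝ, 0 < β → β ≤ γ → ∀ z : EuclideanSpace ℝ (Fin d),
      gβ β z ≤ gβ γ z + ((γ - β) / (2 * β ^ 2)) * ‖z - prox β z‖ ^ 2 := by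
  intro β γ hβ hβγ z
  have hγ : 0 < γ := lt_of_lt_of_le hβ hβγ
  set p := prox β z with hp
  set u := z - p with hu
  -- Subgradient inequality: g p + ⟪u, y - p⟫ / β ≤ g y
  have hA : ∀ y : EuclideanSpace ℝ (Fin d), g p + ⟪u, y - p⟫ / β ≤ g y := by
    intro y
    apply le_of_forall_pos_le_add
    intro ε hε
    by_cases hyp : y = p
    · simp [hyp, inner_zero_right]
      linarith
    have hw : (0:ℝ) < ‖y - p‖ ^ 2 :=
      pow_pos (norm_pos_iff.mpr (sub_ne_zero.mpr hyp)) 2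
    set t : ℝ := min 1 (ε * (2 * β) / ‖y - p‖ ^ 2) with ht
    have ht0 : 0 < t := lt_min one_pos (div_pos (by positivity) hw)
    have ht1 : t ≤ 1 := min_le_left _ _
    have htε : t * ‖y - p‖ ^ 2 ≤ ε * (2 * β) := by
      have h' := min_le_right 1 (ε * (2 * β) / ‖y - p‖ ^ 2)
      calc t * ‖y - p‖ ^ 2 ≤ (ε * (2 * β) / ‖y - p‖ ^ 2) * ‖y - p‖ ^ 2 :=
            mul_le_mul_of_nonneg_right h' (le_of_lt hw)
        _ = ε * (2 * β) := by field_simp; exact div_self (norm_ne_zero_iff.mpr (sub_ne_zero.mpr hyp))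
    have hcvx := hg_cvx.2 (Set.mem_univ p) (Set.mem_univ y)
      (by linarith : (0:ℝ) ≤ 1 - t) (le_of_lt ht0) (by ring)
    have hcvx' : g ((1 - t) • p + t • y) ≤ g p - t * g p + t * g y := by
      simp only [smul_eq_mul] at hcvx
      nlinarith [hcvx]
    have hpt := hprox β hβ z ((1 - t) • p + t • y)
    rw [← hp, ← hu] at hpt
    have hnorm : ‖z - ((1 - t) • p + t • y)‖ ^ 2
        = ‖u‖ ^ 2 - 2 * t * ⟪u, y - p⟫ + t ^ 2 * ‖y - p‖ ^ 2 := by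
      have heq : z - ((1 - t) • p + t • y) = u - t • (y - p) := by
        rw [hu]; module
      rw [heq, norm_sub_sq_real, real_inner_smul_right, norm_smul]
      simp [mul_pow, abs_of_pos ht0]
      ring
    rw [hnorm] at hpt
    rw [aux_exp _ _ _ _ _ (ne_of_gt hβ)] at hpt
    have key : 0 ≤ t * (g y + t * (‖y - p‖ ^ 2 / (2 * β)) - g p - ⟪u, y - p⟫ / β) := by
      nlinarith [hpt, hcvx']
    have key2 : g p + ⟪u, y - p⟫ / β ≤ g y + t * (‖y - p‖ ^ 2 / (2 * β)) := by
      by_contra hcon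
      push_neg at hcon
      nlinarith [key, ht0, hcon]
    have h3 : t * (‖y - p‖ ^ 2 / (2 * β)) ≤ ε := by
      rw [← mul_div_assoc, div_le_iff₀ (by linarith : (0:ℝ) < 2 * β)]
      linarith
    linarith
  -- Lower bound on the γ-envelope terms
  have hB : ∀ y : EuclideanSpace ℝ (Fin d),
      g p + ‖u‖ ^ 2 / β - γ * ‖u‖ ^ 2 / (2 * β ^ 2) ≤ g y + ‖z - y‖ ^ 2 / (2 * γ) := by
    intro y
    have h1 := hA y
    have hinner : ⟪u, y - p⟫ = ‖u‖ ^ 2 - ⟪u, z - y⟫ := by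
      have heq : y - p = u - (z - y) := by rw [hu]; abel
      rw [heq, inner_sub_right, real_inner_self_eq_norm_sq]
    rw [hinner] at h1
    have hcs : ⟪u, z - y⟫ ≤ ‖u‖ * ‖z - y‖ := real_inner_le_norm u (z - y)
    have hsq := aux_sq ‖z - y‖ ‖u‖ β γ (ne_of_gt hβ) (ne_of_gt hγ)
    have hsq' : 0 ≤ ‖z - y‖ ^ 2 / (2 * γ) - ‖u‖ * ‖z - y‖ / β + γ * ‖u‖ ^ 2 / (2 * β ^ 2) := by
      rw [hsq]; positivity
    have hdiv : ⟪u, z - y⟫ / β ≤ ‖u‖ * ‖z - y‖ / β :=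
      div_le_div_of_nonneg_right hcs hβ.le
    have hexp2 : (‖u‖ ^ 2 - ⟪u, z - y⟫) / β = ‖u‖ ^ 2 / β - ⟪u, z - y⟫ / β := by ring
    rw [hexp2] at h1
    linarith
  -- Bound gβ β z from above
  have hub : gβ β z ≤ g p + ‖u‖ ^ 2 / (2 * β) := by
    rw [hgβ β hβ z]
    apply ciInf_le _ p
    exact ⟨g p + ‖u‖ ^ 2 / (2 * β), by rintro _ ⟨y, rfl⟩; exact hprox β hβ z y⟩
  -- Bound gβ γ z from below
  have hlb : g p + ‖u‖ ^ 2 / β - γ * ‖u‖ ^ 2 / (2 * β ^ 2) ≤ gβ γ z := by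
    rw [hgβ γ hγ z]
    exact le_ciInf hB
  have halg : g p + ‖u‖ ^ 2 / (2 * β)
      = (g p + ‖u‖ ^ 2 / β - γ * ‖u‖ ^ 2 / (2 * β ^ 2))
        + ((γ - β) / (2 * β ^ 2)) * ‖u‖ ^ 2 :=
    aux_alg _ _ _ _ (ne_of_gt hβ)
  linarith [hub, hlb, halg.le]
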